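/- Let σ > 0, let μ be the Gaussian measure on ℝ with mean 0 and variance σ², let x₀ ∈ ℝ, and let f : ℝ → ℝ be differentiable with continuous derivative such that both f and f′ have at most polynomial growth. Then w* = ∫ f′(x₀+ξ) dμ(ξ) is the unique minimizer over w ∈ ℝ of the squared-error objective L(w) = ∫ (f(x₀+ξ) − w·ξ)² dμ(ξ). (The C-LIME instance of local function approximation, with additive Gaussian perturbations and squared-error loss, converges in expectation to the SmoothGrad explanation.) -/

import Mathlib

open MeasureTheory ProbabilityTheory Real
open scoped NNReal ENNReal

lemma poly_pow_bound (k : ℕ) (x : ℝ) : (1 + |x|) ^ k ≤ 2 ^ k * (1 + |x| ^ k) := by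
  have h1 : (1 + |x|) ≤ 2 * max 1 |x| := by
    rcases le_total 1 |x| with h | h
    · rw [max_eq_right h]; nlinarith
    · rw [max_eq_left h]; nlinarith [abs_nonneg x]
  calc (1 + |x|) ^ k ≤ (2 * max 1 |x|) ^ k :=
        pow_le_pow_left₀ (by positivity) h1 k
    _ = 2 ^ k * (max 1 |x|) ^ k := by rw [mul_pow]
    _ ≤ 2 ^ k * (1 + |x| ^ k) := by
        gcongr
        rcases le_total 1 |x| with h | h
        · rw [max_eq_right h]; nlinarith [pow_nonneg (abs_nonneg x) k]
        · rw [max_eq_left h]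
          simp only [one_pow]
          nlinarith [pow_nonneg (abs_nonneg x) k,
            pow_le_one₀ (n := k) (abs_nonneg x) h]

lemma integrable_poly_exp {b : ℝ} (hb : 0 < b) (k : ℕ) :
    Integrable (fun x : ℝ => (1 + |x|) ^ k * Real.exp (-b * x ^ 2)) := by
  have habs : Integrable (fun x : ℝ => |x| ^ k * Real.exp (-b * x ^ 2)) := by
    have h := (integrable_rpow_mul_exp_neg_mul_sq hb
      (by exact_mod_cast neg_one_lt_zero.trans_le (Nat.cast_nonneg k) : (-1:ℝ) < (k:ℝ))).abs
    refine h.congr (Filter.Eventually.of_forall fun x => ?_)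
    simp only [Real.rpow_natCast, abs_mul, abs_pow, abs_of_nonneg (Real.exp_pos _).le]
  refine Integrable.mono'
    (((integrable_exp_neg_mul_sq hb).const_mul (2 ^ k)).add (habs.const_mul (2 ^ k)))
    ?_ (Filter.Eventually.of_forall fun x => ?_)
  · exact (((continuous_const.add continuous_abs).pow k).mul
      ((continuous_const.mul (continuous_pow 2)).rexp)).aestronglyMeasurable
  · have hb1 := poly_pow_bound k x
    have he := (Real.exp_pos (-b * x ^ 2)).le
    rw [Real.norm_eq_abs, abs_mul, abs_of_nonneg (by positivity), abs_of_nonneg he]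
    simp only [Pi.add_apply]
    nlinarith [mul_le_mul_of_nonneg_right hb1 he]

variable {V : ℝ≥0}

lemma gpdf_eq (V : ℝ≥0) (x : ℝ) :
    gaussianPDFReal 0 V x = (Real.sqrt (2 * π * V))⁻¹ * Real.exp (-(2 * (V:ℝ))⁻¹ * x ^ 2) := by
  rw [gaussianPDFReal]
  congr 1
  rw [sub_zero]
  ring

lemma continuous_gpdf (V : ℝ≥0) : Continuous (gaussianPDFReal 0 V) := by
  rw [gaussianPDFReal_def]
  exact continuous_const.mul (((continuous_id.sub continuous_const).pow 2).neg.div_const _).rexp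

/-- Integrability of a polynomially-growing continuous function against the Gaussian pdf. -/
lemma integrable_poly_gpdf (hV : (0:ℝ) < V) {g : ℝ → ℝ} (hg : Continuous g)
    {C : ℝ} {k : ℕ} (hb : ∀ x, |g x| ≤ C * (1 + |x|) ^ k) :
    Integrable (fun x => g x * gaussianPDFReal 0 V x) := by
  have hbpos : (0:ℝ) < (2 * (V:ℝ))⁻¹ := by positivity
  refine Integrable.mono'
    ((integrable_poly_exp hbpos k).const_mul (C * (Real.sqrt (2 * π * V))⁻¹))
    (hg.mul (continuous_gpdf V)).aestronglyMeasurable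
    (Filter.Eventually.of_forall fun x => ?_)
  rw [Real.norm_eq_abs, abs_mul, gpdf_eq,
    abs_of_nonneg (by positivity : (0:ℝ) ≤ (Real.sqrt (2 * π * V))⁻¹ * Real.exp (-(2 * (V:ℝ))⁻¹ * x ^ 2))]
  have h1 := hb x
  have h2 : (0:ℝ) ≤ (Real.sqrt (2 * π * V))⁻¹ := by positivity
  have h3 := (Real.exp_pos (-(2 * (V:ℝ))⁻¹ * x ^ 2)).le
  nlinarith [mul_le_mul_of_nonneg_right h1 (mul_nonneg h2 h3)]

/-- derivative of the Gaussian pdf -/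
lemma hasDerivAt_gpdf (hV : (0:ℝ) < V) (x : ℝ) :
    HasDerivAt (gaussianPDFReal 0 V) (-(x / V) * gaussianPDFReal 0 V x) x := by
  have h : HasDerivAt (fun y : ℝ => -(2 * (V:ℝ))⁻¹ * y ^ 2) (-(2 * (V:ℝ))⁻¹ * (2 * x)) x := by
    simpa using ((hasDerivAt_pow 2 x).const_mul (-(2 * (V:ℝ))⁻¹))
  have h2 := ((h.exp).const_mul (Real.sqrt (2 * π * V))⁻¹)
  have : (fun y => (Real.sqrt (2 * π * V))⁻¹ * Real.exp (-(2 * (V:ℝ))⁻¹ * y ^ 2))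
      = gaussianPDFReal 0 V := by
    funext y; rw [gpdf_eq]
  rw [this] at h2
  refine h2.congr_deriv ?_
  rw [gpdf_eq]
  field_simp

/-- Stein's identity / Gaussian integration by parts. -/
lemma stein (hV : (0:ℝ) < V) {g : ℝ → ℝ} (hg : Differentiable ℝ g)
    (hg' : Continuous (deriv g)) {C : ℝ} {k : ℕ}
    (hbg : ∀ x, |g x| ≤ C * (1 + |x|) ^ k) (hbg' : ∀ x, |deriv g x| ≤ C * (1 + |x|) ^ k) :
    ∫ x, x * g x * gaussianPDFReal 0 V x = (V:ℝ) * ∫ x, deriv g x * gaussianPDFReal 0 V x := by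
  set φ := gaussianPDFReal 0 V with hφ
  have hC : (0:ℝ) ≤ C := le_trans (abs_nonneg _) ((hbg 0).trans_eq (by simp))
  -- integrability of the pieces
  have hI1 : Integrable (fun x => deriv g x * φ x) := integrable_poly_gpdf hV hg' hbg'
  have hxg : ∀ x : ℝ, |x * g x| ≤ C * (1 + |x|) ^ (k + 1) := by
    intro x
    rw [abs_mul]
    calc |x| * |g x| ≤ (1 + |x|) * (C * (1 + |x|) ^ k) := by
          apply mul_le_mul (by linarith [abs_nonneg x]) (hbg x) (abs_nonneg _) (by positivity)
      _ = C * (1 + |x|) ^ (k + 1) := by ring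
  have hI2 : Integrable (fun x => x * g x * φ x) :=
    integrable_poly_gpdf hV (continuous_id.mul hg.continuous) hxg
  have hIg : Integrable (fun x => g x * φ x) := integrable_poly_gpdf hV hg.continuous hbg
  -- F = g * φ, F' = deriv g * φ - (x/V) * g * φ
  have hF : ∀ x : ℝ, HasDerivAt (fun y => g y * φ y)
      (deriv g x * φ x - (x / V) * (g x * φ x)) x := by
    intro x
    have := ((hg x).hasDerivAt.mul (hasDerivAt_gpdf hV x))
    refine this.congr_deriv ?_
    ring
  have hIF' : Integrable (fun x => deriv g x * φ x - (x / V) * (g x * φ x)) := by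
    have : Integrable (fun x => ((V:ℝ))⁻¹ * (x * g x * φ x)) := hI2.const_mul _
    refine hI1.sub (this.congr (Filter.Eventually.of_forall fun x => ?_))
    ring
  have hzero : ∫ x, (deriv g x * φ x - (x / V) * (g x * φ x)) = 0 :=
    integral_eq_zero_of_hasDerivAt_of_integrable hF hIF' hIg
  have heq : (fun x : ℝ => x / (V:ℝ) * (g x * φ x)) = fun x => (V:ℝ)⁻¹ * (x * g x * φ x) := by
    funext x; ring
  have hsplit : ∫ x, (deriv g x * φ x - (x / V) * (g x * φ x))
      = (∫ x, deriv g x * φ x) - (V:ℝ)⁻¹ * ∫ x, x * g x * φ x := by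
    rw [integral_sub hI1 (by rw [heq]; exact hI2.const_mul _), heq, integral_const_mul]
  rw [hsplit] at hzero
  have hVne : (V:ℝ) ≠ 0 := ne_of_gt hV
  have h2 : (V:ℝ)⁻¹ * ∫ x, x * g x * φ x = ∫ x, deriv g x * φ x := by linarith
  rw [← h2, ← mul_assoc, mul_inv_cancel₀ hVne, one_mul]

lemma integral_gaussianReal_eq (hV : V ≠ 0) (g : ℝ → ℝ) :
    ∫ x, g x ∂(gaussianReal 0 V) = ∫ x, g x * gaussianPDFReal 0 V x := by
  rw [gaussianReal_of_var_ne_zero 0 hV]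
  have hmeas : Measurable (fun x => (gaussianPDFReal 0 V x).toNNReal) :=
    (measurable_gaussianPDFReal 0 V).real_toNNReal
  have hdens : (volume.withDensity (gaussianPDF 0 V))
      = volume.withDensity (fun x => ((gaussianPDFReal 0 V x).toNNReal : ℝ≥0∞)) := by
    simp_rw [gaussianPDF_def, ENNReal.ofReal]
  rw [hdens, integral_withDensity_eq_integral_smul hmeas]
  refine integral_congr_ae (Filter.Eventually.of_forall fun x => ?_)
  simp only [NNReal.smul_def, smul_eq_mul]
  rw [Real.coe_toNNReal _ (gaussianPDFReal_nonneg 0 V x), mul_comm]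

/-- The C-LIME instance of LFA (additive Gaussian perturbations, squared-error loss,
linear model `g(ξ) = w·ξ`) converges in expectation to the SmoothGrad explanation:
`w* = ∫ f′(x₀+ξ) dμ(ξ)` is the unique minimizer of
`L(w) = ∫ (f(x₀+ξ) − w·ξ)² dμ(ξ)` for `μ = N(0, σ²)`. -/
theorem clime_converges_to_smoothgrad
    (σ : ℝ) (hσ : 0 < σ) (x₀ : ℝ) (f : ℝ → ℝ)
    (hf : Differentiable ℝ f) (hf' : Continuous (deriv f))
    (hgrowth : ∃ C : ℝ, 0 < C ∧ ∃ k : ℕ, ∀ x : ℝ,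
      |f x| ≤ C * (1 + |x|) ^ k ∧ |deriv f x| ≤ C * (1 + |x|) ^ k) :
    let μ : Measure ℝ := gaussianReal 0 ⟨σ ^ 2, by positivity⟩
    let wStar : ℝ := ∫ ξ, deriv f (x₀ + ξ) ∂μ
    let L : ℝ → ℝ := fun w => ∫ ξ, (f (x₀ + ξ) - w * ξ) ^ 2 ∂μ
    (∀ w, L wStar ≤ L w) ∧ (∀ w, L w = L wStar → w = wStar) := by
  intro μ wStar L
  obtain ⟨C, hCpos, k, hCk⟩ := hgrowth
  set V : ℝ≥0 := ⟨σ ^ 2, by positivity⟩ with hVdef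
  have hVpos : (0:ℝ) < V := by show (0:ℝ) < σ ^ 2; positivity
  have hVne : V ≠ 0 := by
    intro h
    rw [h] at hVpos
    simp at hVpos
  set φ : ℝ → ℝ := gaussianPDFReal 0 V with hφdef
  set g : ℝ → ℝ := fun x => f (x₀ + x) with hgdef
  have hd : ∀ x : ℝ, HasDerivAt g (deriv f (x₀ + x)) x := by
    intro x
    simpa using ((hf (x₀ + x)).hasDerivAt).comp_const_add x₀ x
  have hg : Differentiable ℝ g := fun x => (hd x).differentiableAt
  have hderiv : deriv g = fun x => deriv f (x₀ + x) := funext fun x => (hd x).deriv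
  have hg' : Continuous (deriv g) := by
    rw [hderiv]; exact hf'.comp (continuous_const.add continuous_id)
  -- growth bounds for g and deriv g
  set C' : ℝ := C * (1 + |x₀|) ^ k with hC'def
  have hC' : 0 < C' := by positivity
  have hshift : ∀ x : ℝ, (1 + |x₀ + x|) ^ k ≤ (1 + |x₀|) ^ k * (1 + |x|) ^ k := by
    intro x
    rw [← mul_pow]
    apply pow_le_pow_left₀ (by positivity)
    nlinarith [abs_add_le x₀ x, abs_nonneg x₀, abs_nonneg x, abs_nonneg (x₀ + x)]
  have hbg : ∀ x : ℝ, |g x| ≤ C' * (1 + |x|) ^ k := by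
    intro x
    calc |g x| ≤ C * (1 + |x₀ + x|) ^ k := (hCk (x₀ + x)).1
      _ ≤ C * ((1 + |x₀|) ^ k * (1 + |x|) ^ k) := by
          exact mul_le_mul_of_nonneg_left (hshift x) hCpos.le
      _ = C' * (1 + |x|) ^ k := by rw [hC'def]; ring
  have hbg' : ∀ x : ℝ, |deriv g x| ≤ C' * (1 + |x|) ^ k := by
    intro x
    rw [hderiv]
    calc |deriv f (x₀ + x)| ≤ C * (1 + |x₀ + x|) ^ k := (hCk (x₀ + x)).2
      _ ≤ C * ((1 + |x₀|) ^ k * (1 + |x|) ^ k) := by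
          exact mul_le_mul_of_nonneg_left (hshift x) hCpos.le
      _ = C' * (1 + |x|) ^ k := by rw [hC'def]; ring
  -- key integrals
  set W : ℝ := ∫ x, deriv g x * φ x with hWdef
  have hwStar : wStar = W := by
    show (∫ ξ, deriv f (x₀ + ξ) ∂(gaussianReal 0 V)) = W
    rw [integral_gaussianReal_eq hVne, hWdef, hderiv]
  have hSteinG : ∫ x, x * g x * φ x = (V:ℝ) * W :=
    stein hVpos hg hg' hbg hbg'
  -- second moment
  have hM : ∫ x, x ^ 2 * φ x = (V:ℝ) := by
    have hid : Differentiable ℝ (fun x : ℝ => x) := differentiable_id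
    have hid' : deriv (fun x : ℝ => x) = fun _ => 1 := by
      funext x; simp
    have h1 : ∀ x : ℝ, |(fun x : ℝ => x) x| ≤ 1 * (1 + |x|) ^ 1 := by
      intro x
      show |x| ≤ 1 * (1 + |x|) ^ 1
      rw [one_mul, pow_one]; linarith [abs_nonneg x]
    have h2 : ∀ x : ℝ, |deriv (fun x : ℝ => x) x| ≤ 1 * (1 + |x|) ^ 1 := by
      intro x
      rw [hid', one_mul, pow_one]
      rw [abs_one]
      linarith [abs_nonneg x]
    have := stein hVpos hid (by rw [hid']; exact continuous_const) h1 h2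
    rw [hid'] at this
    simp only [one_mul] at this
    have hone : ∫ x, φ x = 1 := integral_gaussianPDFReal_eq_one 0 hVne
    calc ∫ x, x ^ 2 * φ x = ∫ x, x * x * φ x := by
          refine integral_congr_ae (Filter.Eventually.of_forall fun x => ?_); ring
      _ = (V:ℝ) * ∫ x, φ x := this
      _ = (V:ℝ) := by rw [hone, mul_one]
  -- integrability of the three pieces
  have hI0 : Integrable (fun x => g x ^ 2 * φ x) := by
    refine integrable_poly_gpdf hVpos (hg.continuous.pow 2) (C := C' ^ 2) (k := 2 * k) ?_
    intro x
    rw [abs_pow]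
    calc |g x| ^ 2 ≤ (C' * (1 + |x|) ^ k) ^ 2 := by
          apply pow_le_pow_left₀ (abs_nonneg _) (hbg x)
      _ = C' ^ 2 * (1 + |x|) ^ (2 * k) := by rw [mul_pow, ← pow_mul]; ring_nf
  have hI1 : Integrable (fun x => x * g x * φ x) := by
    refine integrable_poly_gpdf hVpos (continuous_id.mul hg.continuous) (C := C') (k := k + 1) ?_
    intro x
    rw [abs_mul]
    calc |x| * |g x| ≤ (1 + |x|) * (C' * (1 + |x|) ^ k) := by
          apply mul_le_mul (by linarith [abs_nonneg x]) (hbg x) (abs_nonneg _) (by positivity)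
      _ = C' * (1 + |x|) ^ (k + 1) := by ring
  have hI2 : Integrable (fun x => x ^ 2 * φ x) := by
    refine integrable_poly_gpdf hVpos (by fun_prop) (C := 1) (k := 2) ?_
    intro x
    rw [abs_pow]
    nlinarith [abs_nonneg x]
  -- expansion of L
  set A : ℝ := ∫ x, g x ^ 2 * φ x with hAdef
  have hLw : ∀ w : ℝ, L w = A - 2 * w * ((V:ℝ) * W) + w ^ 2 * (V:ℝ) := by
    intro w
    have hconv : L w = ∫ x, (g x - w * x) ^ 2 * φ x :=
      integral_gaussianReal_eq hVne _
    have hptw : (fun x => (g x - w * x) ^ 2 * φ x)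
        = fun x => g x ^ 2 * φ x + ((-(2 * w)) * (x * g x * φ x) + w ^ 2 * (x ^ 2 * φ x)) := by
      funext x; ring
    have hIa : Integrable (fun x => (-(2 * w)) * (x * g x * φ x)) := hI1.const_mul _
    have hIb : Integrable (fun x => w ^ 2 * (x ^ 2 * φ x)) := hI2.const_mul _
    have hIsum : Integrable (fun x => (-(2 * w)) * (x * g x * φ x) + w ^ 2 * (x ^ 2 * φ x)) :=
      hIa.add hIb
    rw [hconv, hptw, integral_add hI0 hIsum, integral_add hIa hIb,
      integral_const_mul, integral_const_mul, hSteinG, hM, ← hAdef]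
    ring
  have hkey : ∀ w : ℝ, L w = L wStar + (V:ℝ) * (w - wStar) ^ 2 := by
    intro w
    rw [hLw w, hLw wStar, hwStar]
    ring
  constructor
  · intro w
    rw [hkey w]
    nlinarith [sq_nonneg (w - wStar), hVpos]
  · intro w hw
    rw [hkey w] at hw
    have : (V:ℝ) * (w - wStar) ^ 2 = 0 := by linarith
    have h2 : (w - wStar) ^ 2 = 0 := by
      rcases mul_eq_zero.mp this with h | h
      · exact absurd h (ne_of_gt hVpos)
      · exact h
    have := pow_eq_zero_iff (n := 2) (by norm_num) |>.mp h2
    linarith [sub_eq_zero.mp this]
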